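/- Let m₁, m₂ ∈ ℝ^d with m₁ ≠ m₂, σ > 0 and γ ≥ 1, and set β := ‖m₁ − m₂‖/σ. Then the E_γ-divergence between the isotropic Gaussian measures N(m₁, σ²I_d) and N(m₂, σ²I_d) equals Q(log γ / β − β/2) − γ·Q(log γ / β + β/2), where Q(t) := ∫_t^∞ (1/√(2π))·e^{−u²/2} du is the standard Gaussian tail function. -/

import Mathlib

open MeasureTheory ProbabilityTheory Real
open scoped RealInnerProductSpace

noncomputable def Egamma {Y : Type*} [MeasurableSpace Y] (γ : ℝ) (P Q : Measure Y) : ℝ :=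
  ⨆ A : {A : Set Y // MeasurableSet A}, ((P A.1).toReal - γ * (Q A.1).toReal)

/-- The isotropic Gaussian measure `N(m, σ²·I_d)` on `ℝ^d`. -/
noncomputable def gaussianE (d : ℕ) (m : EuclideanSpace ℝ (Fin d)) (σ : ℝ) :
    Measure (EuclideanSpace ℝ (Fin d)) :=
  volume.withDensity fun t =>
    ENNReal.ofReal ((2 * π * σ ^ 2) ^ (-(d : ℝ) / 2) * Real.exp (-‖t - m‖ ^ 2 / (2 * σ ^ 2)))

/-- The standard Gaussian tail function `Q(t) = ∫_t^∞ (1/√(2π)) e^{-u²/2} du`. -/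
noncomputable def gaussQ (t : ℝ) : ℝ :=
  ∫ u in Set.Ioi t, (1 / Real.sqrt (2 * π)) * Real.exp (-u ^ 2 / 2)

noncomputable def g1 (σ : ℝ) (y : ℝ) : ℝ :=
  (2 * π * σ ^ 2) ^ (-(1:ℝ)/2) * Real.exp (-y ^ 2 / (2 * σ ^ 2))

variable {σ : ℝ}

lemma twopis_pos (hσ : 0 < σ) : 0 < 2 * π * σ ^ 2 := by positivity

lemma g1_nonneg (hσ : 0 < σ) (y : ℝ) : 0 ≤ g1 σ y := by
  unfold g1; positivity

lemma g1_integrable (hσ : 0 < σ) : Integrable (g1 σ) := by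
  unfold g1
  apply Integrable.const_mul
  have h1 : (fun y : ℝ => Real.exp (-y ^ 2 / (2 * σ ^ 2)))
      = fun y : ℝ => Real.exp (-((2 * σ ^ 2)⁻¹) * y ^ 2) := by
    funext y; congr 1; field_simp
  rw [h1]
  exact integrable_exp_neg_mul_sq (by positivity)

lemma g1_integral (hσ : 0 < σ) : ∫ y : ℝ, g1 σ y = 1 := by
  unfold g1
  rw [integral_const_mul]
  have h2 : ∫ y : ℝ, Real.exp (-y ^ 2 / (2 * σ ^ 2)) = Real.sqrt (2 * π * σ ^ 2) := by
    have h1 : (fun y : ℝ => Real.exp (-y ^ 2 / (2 * σ ^ 2)))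
        = fun y : ℝ => Real.exp (-((2 * σ ^ 2)⁻¹) * y ^ 2) := by
      funext y; congr 1; field_simp
    rw [h1, integral_gaussian]
    congr 1
    field_simp
  rw [h2, show (-(1:ℝ)/2) = -(1/2) by ring, Real.rpow_neg (twopis_pos hσ).le,
    ← Real.sqrt_eq_rpow]
  exact inv_mul_cancel₀ (Real.sqrt_pos.mpr (twopis_pos hσ)).ne'

lemma g1_integral_Ici (hσ : 0 < σ) (a : ℝ) :
    ∫ y in Set.Ici (σ * a), g1 σ y = gaussQ a := by
  rw [integral_Ici_eq_integral_Ioi]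
  have h0 := integral_comp_mul_left_Ioi (g1 σ) a hσ
  have h2 : ∫ x in Set.Ioi (σ * a), g1 σ x = σ * ∫ x in Set.Ioi a, g1 σ (σ * x) := by
    rw [h0, smul_eq_mul]; field_simp
  rw [h2, gaussQ, ← integral_const_mul]
  congr 1
  funext x
  unfold g1
  have e1 : -(σ * x) ^ 2 / (2 * σ ^ 2) = -x ^ 2 / 2 := by
    field_simp
  rw [e1]
  have e2 : σ * (2 * π * σ ^ 2) ^ (-(1:ℝ)/2) = 1 / Real.sqrt (2 * π) := by
    rw [show (-(1:ℝ)/2) = -(1/2) by ring, Real.rpow_neg (twopis_pos hσ).le,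
      ← Real.sqrt_eq_rpow, Real.sqrt_mul (by positivity : (0:ℝ) ≤ 2 * π),
      Real.sqrt_sq hσ.le]
    rw [mul_inv]
    field_simp
  rw [← mul_assoc, e2]


lemma prod_g1 (d : ℕ) (hσ : 0 < σ) (x : Fin d → ℝ) :
    ∏ i, g1 σ (x i)
      = (2 * π * σ ^ 2) ^ (-(d : ℝ) / 2) * Real.exp (-(∑ i, (x i) ^ 2) / (2 * σ ^ 2)) := by
  unfold g1
  rw [Finset.prod_mul_distrib, Finset.prod_const, ← Real.exp_sum]
  congr 1
  · rw [Finset.card_univ, Fintype.card_fin, ← Real.rpow_natCast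
      ((2 * π * σ ^ 2) ^ (-(1:ℝ)/2)) d, ← Real.rpow_mul (twopis_pos hσ).le]
    congr 1
    ring
  · congr 1
    rw [← Finset.sum_div, ← Finset.sum_neg_distrib]

lemma gaussianE_inner_preimage (d : ℕ) (m : EuclideanSpace ℝ (Fin d)) (hσ : 0 < σ)
    (u : EuclideanSpace ℝ (Fin d)) (hu : ‖u‖ = 1) (s : Set ℝ) (hs : MeasurableSet s) :
    gaussianE d m σ {t | ⟪u, t - m⟫ ∈ s} = ENNReal.ofReal (∫ y in s, g1 σ y) := by
  have hd : 0 < d := by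
    by_contra h
    have hd0 : d = 0 := by omega
    subst hd0
    have hu0 : u = 0 := Subsingleton.elim u 0
    rw [hu0, norm_zero] at hu; norm_num at hu
  haveI : NeZero d := ⟨hd.ne'⟩
  obtain ⟨b, hb⟩ : ∃ b : OrthonormalBasis (Fin d) ℝ (EuclideanSpace ℝ (Fin d)), b 0 = u := by
    have hcard : Module.finrank ℝ (EuclideanSpace ℝ (Fin d)) = Fintype.card (Fin d) := by
      simp [finrank_euclideanSpace]
    have horth : Orthonormal ℝ (Set.restrict {(0 : Fin d)} (fun _ => u)) := by
      constructor
      · intro i; exact hu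
      · intro i j hij
        exact absurd (Subtype.ext (by
          have hi := i.2; have hj := j.2
          simp only [Set.mem_singleton_iff] at hi hj
          rw [hi, hj])) hij
    obtain ⟨b, hb⟩ := horth.exists_orthonormalBasis_extension_of_card_eq hcard
    exact ⟨b, hb 0 rfl⟩
  set e := (MeasurableEquiv.toLp 2 (Fin d → ℝ)).symm with he
  set φ : (Fin d → ℝ) → EuclideanSpace ℝ (Fin d) :=
    fun x => m + b.repr.symm (e.symm x) with hφdef
  have hφ : MeasurePreserving φ volume volume := by
    have h1 : MeasurePreserving (fun z : EuclideanSpace ℝ (Fin d) => m + z) volume volume :=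
      measurePreserving_add_left volume m
    have h2 : MeasurePreserving (⇑b.repr.symm) volume volume := b.measurePreserving_repr_symm
    have h3 : MeasurePreserving (⇑e.symm) volume volume :=
      (EuclideanSpace.volume_preserving_symm_measurableEquiv_toLp (Fin d)).symm
    exact (h1.comp h2).comp h3
  have hTmeas : MeasurableSet {t : EuclideanSpace ℝ (Fin d) | ⟪u, t - m⟫ ∈ s} := by
    have hc : Continuous fun t : EuclideanSpace ℝ (Fin d) => ⟪u, t - m⟫ :=
      continuous_const.inner (continuous_id.sub continuous_const)
    exact hc.measurable hs
  have hfm : Measurable fun t : EuclideanSpace ℝ (Fin d) =>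
      ENNReal.ofReal ((2 * π * σ ^ 2) ^ (-(d : ℝ) / 2)
        * Real.exp (-‖t - m‖ ^ 2 / (2 * σ ^ 2))) := by
    apply ENNReal.measurable_ofReal.comp
    fun_prop
  rw [gaussianE, withDensity_apply _ hTmeas, ← hφ.setLIntegral_comp_preimage hTmeas hfm]
  have hpre : φ ⁻¹' {t | ⟪u, t - m⟫ ∈ s} = {x : Fin d → ℝ | x 0 ∈ s} := by
    ext x
    simp only [Set.mem_preimage, Set.mem_setOf_eq, hφdef]
    have hx0 : ⟪u, m + b.repr.symm (e.symm x) - m⟫ = x 0 := by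
      rw [add_sub_cancel_left, ← hb, ← OrthonormalBasis.repr_apply_apply,
        LinearIsometryEquiv.apply_symm_apply]
      rfl
    rw [hx0]
  have hfφ : ∀ x : Fin d → ℝ,
      (2 * π * σ ^ 2) ^ (-(d : ℝ) / 2) * Real.exp (-‖φ x - m‖ ^ 2 / (2 * σ ^ 2))
        = ∏ i, g1 σ (x i) := by
    intro x
    rw [prod_g1 d hσ]
    have hnorm : ‖φ x - m‖ ^ 2 = ∑ i, (x i) ^ 2 := by
      show ‖m + b.repr.symm (e.symm x) - m‖ ^ 2 = _
      rw [add_sub_cancel_left, LinearIsometryEquiv.norm_map, EuclideanSpace.norm_eq,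
        Real.sq_sqrt (by positivity)]
      apply Finset.sum_congr rfl
      intro i _
      rw [Real.norm_eq_abs, sq_abs]
      rfl
    rw [hnorm]
  rw [hpre]
  set S : Set (Fin d → ℝ) := {x : Fin d → ℝ | x 0 ∈ s} with hSdef
  have hSmeas : MeasurableSet S := (measurable_pi_apply 0) hs
  classical
  set gI : Fin d → ℝ → ℝ := fun i => if i = 0 then Set.indicator s (g1 σ) else g1 σ with hgI
  have hind : ∀ x : Fin d → ℝ,
      Set.indicator S (fun x => ∏ i, g1 σ (x i)) x = ∏ i, gI i (x i) := by
    intro x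
    by_cases hx : x ∈ S
    · rw [Set.indicator_of_mem hx]
      apply Finset.prod_congr rfl
      intro i _
      have hx0 : x 0 ∈ s := hx
      by_cases hi : i = 0
      · subst hi; simp only [hgI, if_true]
        rw [Set.indicator_of_mem hx0]
      · simp [hgI, hi]
    · rw [Set.indicator_of_notMem hx]
      symm
      have hx0 : x 0 ∉ s := hx
      apply Finset.prod_eq_zero (Finset.mem_univ (0 : Fin d))
      simp only [hgI, if_true]
      rw [Set.indicator_of_notMem hx0]
  have hIgI : ∀ i, Integrable (gI i) := by
    intro i
    by_cases hi : i = 0 <;> simp only [hgI, hi, if_true, if_false]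
    · exact (g1_integrable hσ).indicator hs
    · exact g1_integrable hσ
  have hInt : Integrable fun x : Fin d → ℝ => ∏ i, gI i (x i) := Integrable.fintype_prod hIgI
  have hnn : 0 ≤ᵐ[(volume : Measure (Fin d → ℝ))] fun x : Fin d → ℝ => ∏ i, gI i (x i) := by
    refine Filter.Eventually.of_forall fun x => Finset.prod_nonneg fun i _ => ?_
    by_cases hi : i = 0 <;> simp only [hgI, hi, if_true, if_false]
    · exact Set.indicator_nonneg (fun y _ => g1_nonneg hσ y) _
    · exact g1_nonneg hσ _
  have e1 : (fun x : Fin d → ℝ => ENNReal.ofReal ((2 * π * σ ^ 2) ^ (-(d : ℝ) / 2)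
        * Real.exp (-‖φ x - m‖ ^ 2 / (2 * σ ^ 2))))
      = fun x => ENNReal.ofReal (∏ i, g1 σ (x i)) := funext fun x => by rw [hfφ x]
  rw [e1, ← lintegral_indicator hSmeas]
  have e2 : (Set.indicator S fun x : Fin d → ℝ => ENNReal.ofReal (∏ i, g1 σ (x i)))
      = fun x => ENNReal.ofReal (∏ i, gI i (x i)) := by
    funext x
    rw [← hind x]
    by_cases hx : x ∈ S
    · rw [Set.indicator_of_mem hx, Set.indicator_of_mem hx]
    · rw [Set.indicator_of_notMem hx, Set.indicator_of_notMem hx, ENNReal.ofReal_zero]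
  rw [e2, ← ofReal_integral_eq_lintegral_ofReal hInt hnn,
    volume_pi, integral_fintype_prod_eq_prod (ι := Fin d) gI]
  congr 1
  have e3 : ∀ i, ∫ y, gI i y = if i = 0 then (∫ y in s, g1 σ y) else 1 := by
    intro i
    by_cases hi : i = 0 <;> simp only [hgI, hi, if_true, if_false]
    · exact integral_indicator hs
    · exact g1_integral hσ
  calc ∏ i, ∫ y, gI i y = ∏ i, if i = 0 then (∫ y in s, g1 σ y) else 1 :=
        Finset.prod_congr rfl fun i _ => e3 i
    _ = ∫ y in s, g1 σ y := by
        rw [Finset.prod_ite_eq' Finset.univ (0 : Fin d) (fun _ => ∫ y in s, g1 σ y)]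
        simp

lemma gaussQ_nonneg (a : ℝ) : 0 ≤ gaussQ a := by
  unfold gaussQ
  apply integral_nonneg
  intro y
  positivity

lemma gaussianE_isProbability (d : ℕ) (hd : 0 < d) (m : EuclideanSpace ℝ (Fin d)) (hσ : 0 < σ) :
    IsProbabilityMeasure (gaussianE d m σ) := by
  haveI : NeZero d := ⟨hd.ne'⟩
  constructor
  have hu : ‖EuclideanSpace.single (0 : Fin d) (1:ℝ)‖ = 1 := by
    rw [EuclideanSpace.norm_single]; norm_num
  have h := gaussianE_inner_preimage d m hσ _ hu Set.univ MeasurableSet.univ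
  simp only [Set.mem_univ, Set.setOf_true] at h
  rw [h, Measure.restrict_univ, g1_integral hσ, ENNReal.ofReal_one]

/-- The `E_γ`-divergence between two isotropic Gaussians with the same
covariance `σ²·I_d`:  with `β = ‖m₁ − m₂‖/σ`,
`E_γ(N(m₁,σ²I) ‖ N(m₂,σ²I)) = Q(log γ/β − β/2) − γ·Q(log γ/β + β/2)`. -/
theorem Egamma_gaussian (d : ℕ) (m₁ m₂ : EuclideanSpace ℝ (Fin d)) (hm : m₁ ≠ m₂)
    (σ γ : ℝ) (hσ : 0 < σ) (hγ : 1 ≤ γ) :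
    Egamma γ (gaussianE d m₁ σ) (gaussianE d m₂ σ) =
      gaussQ (Real.log γ / (‖m₁ - m₂‖ / σ) - (‖m₁ - m₂‖ / σ) / 2)
        - γ * gaussQ (Real.log γ / (‖m₁ - m₂‖ / σ) + (‖m₁ - m₂‖ / σ) / 2) := by
  classical
  have hγ0 : (0:ℝ) < γ := lt_of_lt_of_le one_pos hγ
  set v : EuclideanSpace ℝ (Fin d) := m₁ - m₂ with hv
  have hvne : v ≠ 0 := sub_ne_zero.mpr hm
  have hr : 0 < ‖v‖ := norm_pos_iff.mpr hvne
  have hd : 0 < d := by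
    by_contra h
    have hd0 : d = 0 := by omega
    subst hd0
    exact hm (Subsingleton.elim _ _)
  set β : ℝ := ‖v‖ / σ with hβdef
  have hβ : 0 < β := div_pos hr hσ
  set a₁ : ℝ := Real.log γ / β - β / 2 with ha₁def
  set a₂ : ℝ := Real.log γ / β + β / 2 with ha₂def
  set u : EuclideanSpace ℝ (Fin d) := ‖v‖⁻¹ • v with hu_def
  have hu : ‖u‖ = 1 := by
    rw [hu_def, norm_smul, norm_inv, norm_norm, inv_mul_cancel₀ hr.ne']
  haveI hPp : IsProbabilityMeasure (gaussianE d m₁ σ) := gaussianE_isProbability d hd m₁ hσ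
  haveI hQp : IsProbabilityMeasure (gaussianE d m₂ σ) := gaussianE_isProbability d hd m₂ hσ
  set A : Set (EuclideanSpace ℝ (Fin d)) := {t | σ * a₁ ≤ ⟪u, t - m₁⟫} with hAdef
  have hcont : Continuous fun t : EuclideanSpace ℝ (Fin d) => ⟪u, t - m₁⟫ :=
    continuous_const.inner (continuous_id.sub continuous_const)
  have hAmeas : MeasurableSet A := measurableSet_le measurable_const hcont.measurable
  have hPA : gaussianE d m₁ σ A = ENNReal.ofReal (gaussQ a₁) := by
    have h1 : A = {t | ⟪u, t - m₁⟫ ∈ Set.Ici (σ * a₁)} := by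
      ext t; simp [hAdef, Set.mem_Ici]
    rw [h1, gaussianE_inner_preimage d m₁ hσ u hu _ measurableSet_Ici, g1_integral_Ici hσ]
  have hinner_uv : ⟪u, v⟫ = ‖v‖ := by
    rw [hu_def, real_inner_smul_left, real_inner_self_eq_norm_sq]
    field_simp
  have hQA : gaussianE d m₂ σ A = ENNReal.ofReal (gaussQ a₂) := by
    have h1 : A = {t | ⟪u, t - m₂⟫ ∈ Set.Ici (σ * a₂)} := by
      ext t
      simp only [hAdef, Set.mem_setOf_eq, Set.mem_Ici]
      have e1 : ⟪u, t - m₂⟫ = ⟪u, t - m₁⟫ + ‖v‖ := by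
        have h2 : t - m₂ = (t - m₁) + v := by rw [hv]; abel
        rw [h2, inner_add_right, hinner_uv]
      have e2 : σ * a₂ = σ * a₁ + ‖v‖ := by
        rw [ha₁def, ha₂def, hβdef]
        field_simp
        ring
      rw [e1, e2]
      constructor <;> intro h <;> linarith
    rw [h1, gaussianE_inner_preimage d m₂ hσ u hu _ measurableSet_Ici, g1_integral_Ici hσ]
  -- pointwise density comparison
  set C : ℝ := (2 * π * σ ^ 2) ^ (-(d : ℝ) / 2) with hCdef
  have hCpos : 0 < C := Real.rpow_pos_of_pos (twopis_pos hσ) _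
  have h2σ : (0:ℝ) < 2 * σ ^ 2 := by positivity
  have ha₁r : σ * a₁ * ‖v‖ = σ ^ 2 * Real.log γ - ‖v‖ ^ 2 / 2 := by
    rw [ha₁def, hβdef]
    field_simp
  have key : ∀ t : EuclideanSpace ℝ (Fin d), t ∈ A ↔
      γ * (C * Real.exp (-‖t - m₂‖ ^ 2 / (2 * σ ^ 2)))
        ≤ C * Real.exp (-‖t - m₁‖ ^ 2 / (2 * σ ^ 2)) := by
    intro t
    have hnorm : ‖t - m₂‖ ^ 2 = ‖t - m₁‖ ^ 2 + 2 * ⟪t - m₁, v⟫ + ‖v‖ ^ 2 := by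
      have h2 : t - m₂ = (t - m₁) + v := by rw [hv]; abel
      rw [h2, norm_add_sq_real]
    have hinner : ⟪u, t - m₁⟫ = ‖v‖⁻¹ * ⟪t - m₁, v⟫ := by
      rw [hu_def, real_inner_smul_left, real_inner_comm]
    have hAiff : t ∈ A ↔ σ * a₁ * ‖v‖ ≤ ⟪t - m₁, v⟫ := by
      rw [hAdef, Set.mem_setOf_eq, hinner, inv_mul_eq_div, le_div_iff₀ hr]
    rw [hAiff, mul_left_comm, mul_le_mul_iff_right₀ hCpos,
      ← Real.log_le_log_iff (by positivity) (Real.exp_pos _),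
      Real.log_mul hγ0.ne' (Real.exp_pos _).ne', Real.log_exp, Real.log_exp, hnorm, ha₁r]
    have hsplit : -(‖t - m₁‖ ^ 2 + 2 * ⟪t - m₁, v⟫ + ‖v‖ ^ 2) / (2 * σ ^ 2)
        = -‖t - m₁‖ ^ 2 / (2 * σ ^ 2)
          - (2 * ⟪t - m₁, v⟫ + ‖v‖ ^ 2) / (2 * σ ^ 2) := by ring
    constructor
    · intro h
      have h2 : Real.log γ * (2 * σ ^ 2) ≤ 2 * ⟪t - m₁, v⟫ + ‖v‖ ^ 2 := by linarith
      have h1 : Real.log γ ≤ (2 * ⟪t - m₁, v⟫ + ‖v‖ ^ 2) / (2 * σ ^ 2) := (le_div_iff₀ h2σ).mpr h2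
      linarith [hsplit]
    · intro h
      have h1 : Real.log γ ≤ (2 * ⟪t - m₁, v⟫ + ‖v‖ ^ 2) / (2 * σ ^ 2) := by linarith [hsplit]
      have h2 : Real.log γ * (2 * σ ^ 2) ≤ 2 * ⟪t - m₁, v⟫ + ‖v‖ ^ 2 := (le_div_iff₀ h2σ).mp h1
      linarith
  -- measure comparison on subsets
  have hmeasP : Measurable fun t : EuclideanSpace ℝ (Fin d) =>
      ENNReal.ofReal (C * Real.exp (-‖t - m₁‖ ^ 2 / (2 * σ ^ 2))) := by
    apply ENNReal.measurable_ofReal.comp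
    fun_prop
  have hmeasQγ : Measurable fun t : EuclideanSpace ℝ (Fin d) =>
      ENNReal.ofReal (γ * (C * Real.exp (-‖t - m₂‖ ^ 2 / (2 * σ ^ 2)))) := by
    apply ENNReal.measurable_ofReal.comp
    fun_prop
  have mono1 : ∀ S : Set (EuclideanSpace ℝ (Fin d)), MeasurableSet S → (∀ t ∈ S, t ∉ A) →
      gaussianE d m₁ σ S ≤ ENNReal.ofReal γ * gaussianE d m₂ σ S := by
    intro S hS hSA
    rw [gaussianE, gaussianE, withDensity_apply _ hS, withDensity_apply _ hS,
      ← lintegral_const_mul' _ _ ENNReal.ofReal_ne_top]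
    calc ∫⁻ t in S, ENNReal.ofReal (C * Real.exp (-‖t - m₁‖ ^ 2 / (2 * σ ^ 2))) ∂volume
        ≤ ∫⁻ t in S, ENNReal.ofReal (γ * (C * Real.exp (-‖t - m₂‖ ^ 2 / (2 * σ ^ 2)))) ∂volume := by
          apply setLIntegral_mono hmeasQγ
          intro t ht
          apply ENNReal.ofReal_le_ofReal
          have hnA := hSA t ht
          by_contra hcon
          push_neg at hcon
          exact hnA ((key t).mpr hcon.le)
      _ = ∫⁻ t in S, ENNReal.ofReal γ
            * ENNReal.ofReal (C * Real.exp (-‖t - m₂‖ ^ 2 / (2 * σ ^ 2))) ∂volume := by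
          apply setLIntegral_congr_fun hS
          intro t _
          exact ENNReal.ofReal_mul hγ0.le
  have mono2 : ∀ S : Set (EuclideanSpace ℝ (Fin d)), MeasurableSet S → S ⊆ A →
      ENNReal.ofReal γ * gaussianE d m₂ σ S ≤ gaussianE d m₁ σ S := by
    intro S hS hSA
    rw [gaussianE, gaussianE, withDensity_apply _ hS, withDensity_apply _ hS,
      ← lintegral_const_mul' _ _ ENNReal.ofReal_ne_top]
    calc ∫⁻ t in S, ENNReal.ofReal γ
            * ENNReal.ofReal (C * Real.exp (-‖t - m₂‖ ^ 2 / (2 * σ ^ 2))) ∂volume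
        = ∫⁻ t in S, ENNReal.ofReal (γ * (C * Real.exp (-‖t - m₂‖ ^ 2 / (2 * σ ^ 2)))) ∂volume := by
          apply setLIntegral_congr_fun hS
          intro t _
          exact (ENNReal.ofReal_mul hγ0.le).symm
      _ ≤ ∫⁻ t in S, ENNReal.ofReal (C * Real.exp (-‖t - m₁‖ ^ 2 / (2 * σ ^ 2))) ∂volume := by
          apply setLIntegral_mono hmeasP
          intro t ht
          exact ENNReal.ofReal_le_ofReal ((key t).mp (hSA ht))
  -- main bound
  have bound : ∀ B : Set (EuclideanSpace ℝ (Fin d)), MeasurableSet B →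
      (gaussianE d m₁ σ B).toReal - γ * (gaussianE d m₂ σ B).toReal ≤
      (gaussianE d m₁ σ A).toReal - γ * (gaussianE d m₂ σ A).toReal := by
    intro B hB
    have h1 : gaussianE d m₁ σ (B ∩ A) + gaussianE d m₁ σ (B \ A) = gaussianE d m₁ σ B :=
      measure_inter_add_diff B hAmeas
    have h2 : gaussianE d m₂ σ (B ∩ A) + gaussianE d m₂ σ (B \ A) = gaussianE d m₂ σ B :=
      measure_inter_add_diff B hAmeas
    have h3 : gaussianE d m₁ σ (A ∩ B) + gaussianE d m₁ σ (A \ B) = gaussianE d m₁ σ A :=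
      measure_inter_add_diff A hB
    have h4 : gaussianE d m₂ σ (A ∩ B) + gaussianE d m₂ σ (A \ B) = gaussianE d m₂ σ A :=
      measure_inter_add_diff A hB
    have hswap : A ∩ B = B ∩ A := Set.inter_comm A B
    rw [hswap] at h3 h4
    have e1 : (gaussianE d m₁ σ B).toReal
        = (gaussianE d m₁ σ (B ∩ A)).toReal + (gaussianE d m₁ σ (B \ A)).toReal := by
      rw [← h1, ENNReal.toReal_add (measure_ne_top _ _) (measure_ne_top _ _)]
    have e2 : γ * (gaussianE d m₂ σ B).toReal
        = γ * (gaussianE d m₂ σ (B ∩ A)).toReal + γ * (gaussianE d m₂ σ (B \ A)).toReal := by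
      rw [← h2, ENNReal.toReal_add (measure_ne_top _ _) (measure_ne_top _ _)]; ring
    have e3 : (gaussianE d m₁ σ A).toReal
        = (gaussianE d m₁ σ (B ∩ A)).toReal + (gaussianE d m₁ σ (A \ B)).toReal := by
      rw [← h3, ENNReal.toReal_add (measure_ne_top _ _) (measure_ne_top _ _)]
    have e4 : γ * (gaussianE d m₂ σ A).toReal
        = γ * (gaussianE d m₂ σ (B ∩ A)).toReal + γ * (gaussianE d m₂ σ (A \ B)).toReal := by
      rw [← h4, ENNReal.toReal_add (measure_ne_top _ _) (measure_ne_top _ _)]; ring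
    have m1 := mono1 (B \ A) (hB.diff hAmeas) (fun t ht => ht.2)
    have m2 := mono2 (A \ B) (hAmeas.diff hB) (fun t ht => ht.1)
    have m1' : (gaussianE d m₁ σ (B \ A)).toReal ≤ γ * (gaussianE d m₂ σ (B \ A)).toReal := by
      have := ENNReal.toReal_mono
        (ENNReal.mul_ne_top ENNReal.ofReal_ne_top (measure_ne_top _ _)) m1
      rwa [ENNReal.toReal_mul, ENNReal.toReal_ofReal hγ0.le] at this
    have m2' : γ * (gaussianE d m₂ σ (A \ B)).toReal ≤ (gaussianE d m₁ σ (A \ B)).toReal := by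
      have := ENNReal.toReal_mono (measure_ne_top _ _) m2
      rwa [ENNReal.toReal_mul, ENNReal.toReal_ofReal hγ0.le] at this
    linarith
  have hval : (gaussianE d m₁ σ A).toReal - γ * (gaussianE d m₂ σ A).toReal
      = gaussQ a₁ - γ * gaussQ a₂ := by
    rw [hPA, hQA, ENNReal.toReal_ofReal (gaussQ_nonneg a₁), ENNReal.toReal_ofReal (gaussQ_nonneg a₂)]
  rw [Egamma]
  have hbdd : BddAbove (Set.range fun B : {B : Set (EuclideanSpace ℝ (Fin d)) // MeasurableSet B}
      => (gaussianE d m₁ σ B.1).toReal - γ * (gaussianE d m₂ σ B.1).toReal) := by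
    refine ⟨gaussQ a₁ - γ * gaussQ a₂, ?_⟩
    rintro x ⟨B, rfl⟩
    exact le_trans (bound B.1 B.2) hval.le
  apply le_antisymm
  · apply ciSup_le
    intro B
    exact le_trans (bound B.1 B.2) hval.le
  · rw [← hval]
    exact le_ciSup hbdd (⟨A, hAmeas⟩ : {B : Set (EuclideanSpace ℝ (Fin d)) // MeasurableSet B})
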